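/- arXiv:1203.5480 — 2 statements merged into one kernel-verified Lean document; each statement's English description precedes it below -/
import Mathlib

section
/- Let f be bi-univalent with inverse extension F. If zf'(z)/f(z) ≺ φ(z) and F'(w) ≺ φ(w), then the second Taylor coefficient of f satisfies |a₂| ≤ √(5(B₁ + |B₂ − B₁|))/3. -/
open Metric Set Complex

noncomputable section

open Filter


lemma analyticAt_deriv2 {a : ℂ → ℂ} {x : ℂ} (ha : AnalyticAt ℂ a x) :
    AnalyticAt ℂ (deriv a) x := by
  obtain ⟨s, hs, h⟩ := ha.eventually_analyticAt.exists_mem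
  exact (AnalyticOnNhd.deriv (fun y hy => h y hy)) x (mem_of_mem_nhds hs)

lemma evDeriv_mul {a b : ℂ → ℂ} (ha : AnalyticAt ℂ a 0) (hb : AnalyticAt ℂ b 0) :
    deriv (fun z => a z * b z) =ᶠ[nhds 0] fun z => deriv a z * b z + a z * deriv b z := by
  filter_upwards [ha.eventually_analyticAt, hb.eventually_analyticAt] with z haz hbz
  exact deriv_mul haz.differentiableAt hbz.differentiableAt

lemma evDeriv_add {a b : ℂ → ℂ} (ha : AnalyticAt ℂ a 0) (hb : AnalyticAt ℂ b 0) :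
    deriv (fun z => a z + b z) =ᶠ[nhds 0] fun z => deriv a z + deriv b z := by
  filter_upwards [ha.eventually_analyticAt, hb.eventually_analyticAt] with z haz hbz
  exact deriv_add haz.differentiableAt hbz.differentiableAt

lemma evDeriv_comp {u v : ℂ → ℂ} (hu : AnalyticAt ℂ u (v 0)) (hv : AnalyticAt ℂ v 0) :
    deriv (fun z => u (v z)) =ᶠ[nhds 0] fun z => deriv u (v z) * deriv v z := by
  have h1 : ∀ᶠ z in nhds 0, AnalyticAt ℂ u (v z) :=
    hv.continuousAt.eventually hu.eventually_analyticAt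
  filter_upwards [h1, hv.eventually_analyticAt] with z huz hvz
  exact deriv_comp z huz.differentiableAt hvz.differentiableAt

-- derivatives of a product at 0
lemma mul_d1 {a b : ℂ → ℂ} (ha : AnalyticAt ℂ a 0) (hb : AnalyticAt ℂ b 0) :
    deriv (fun z => a z * b z) 0 = deriv a 0 * b 0 + a 0 * deriv b 0 :=
  deriv_mul ha.differentiableAt hb.differentiableAt

lemma mul_d2 {a b : ℂ → ℂ} (ha : AnalyticAt ℂ a 0) (hb : AnalyticAt ℂ b 0) :
    deriv (deriv (fun z => a z * b z)) 0 =
      deriv (deriv a) 0 * b 0 + 2 * deriv a 0 * deriv b 0 + a 0 * deriv (deriv b) 0 := by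
  rw [(evDeriv_mul ha hb).deriv_eq]
  rw [deriv_fun_add (f := fun z => deriv a z * b z) (g := fun z => a z * deriv b z)
      ((analyticAt_deriv2 ha).mul hb).differentiableAt
      (ha.mul (analyticAt_deriv2 hb)).differentiableAt,
    mul_d1 (analyticAt_deriv2 ha) hb, mul_d1 ha (analyticAt_deriv2 hb)]
  ring

lemma evDeriv2_mul {a b : ℂ → ℂ} (ha : AnalyticAt ℂ a 0) (hb : AnalyticAt ℂ b 0) :
    deriv (deriv (fun z => a z * b z)) =ᶠ[nhds 0]
      fun z => deriv (deriv a) z * b z + 2 * deriv a z * deriv b z + a z * deriv (deriv b) z := by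
  refine ((evDeriv_mul ha hb).deriv).trans ?_
  filter_upwards [ha.eventually_analyticAt, hb.eventually_analyticAt,
    (analyticAt_deriv2 ha).eventually_analyticAt,
    (analyticAt_deriv2 hb).eventually_analyticAt] with z haz hbz haz' hbz'
  rw [deriv_fun_add (f := fun z => deriv a z * b z) (g := fun z => a z * deriv b z)
      (haz'.mul hbz).differentiableAt (haz.mul hbz').differentiableAt,
    deriv_fun_mul haz'.differentiableAt hbz.differentiableAt,
    deriv_fun_mul haz.differentiableAt hbz'.differentiableAt]
  ring

lemma mul_d3 {a b : ℂ → ℂ} (ha : AnalyticAt ℂ a 0) (hb : AnalyticAt ℂ b 0) :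
    deriv (deriv (deriv (fun z => a z * b z))) 0 =
      deriv (deriv (deriv a)) 0 * b 0 + 3 * deriv (deriv a) 0 * deriv b 0
        + 3 * deriv a 0 * deriv (deriv b) 0 + a 0 * deriv (deriv (deriv b)) 0 := by
  rw [(evDeriv2_mul ha hb).deriv_eq]
  have h1 : AnalyticAt ℂ (fun z => deriv (deriv a) z * b z) 0 :=
    (analyticAt_deriv2 (analyticAt_deriv2 ha)).mul hb
  have h2 : AnalyticAt ℂ (fun z => 2 * deriv a z * deriv b z) 0 :=
    ((analyticAt_const.mul (analyticAt_deriv2 ha))).mul (analyticAt_deriv2 hb)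
  have h3 : AnalyticAt ℂ (fun z => a z * deriv (deriv b) z) 0 :=
    ha.mul (analyticAt_deriv2 (analyticAt_deriv2 hb))
  rw [show (fun z => deriv (deriv a) z * b z + 2 * deriv a z * deriv b z
        + a z * deriv (deriv b) z)
      = fun z => (deriv (deriv a) z * b z + 2 * deriv a z * deriv b z)
        + a z * deriv (deriv b) z from rfl]
  rw [deriv_fun_add (f := fun z => deriv (deriv a) z * b z + 2 * deriv a z * deriv b z)
      (g := fun z => a z * deriv (deriv b) z)
      (h1.differentiableAt.add h2.differentiableAt) h3.differentiableAt,
    deriv_fun_add h1.differentiableAt h2.differentiableAt,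
    mul_d1 (analyticAt_deriv2 (analyticAt_deriv2 ha)) hb,
    mul_d1 ha (analyticAt_deriv2 (analyticAt_deriv2 hb))]
  have : deriv (fun z => 2 * deriv a z * deriv b z) 0
      = 2 * deriv (deriv a) 0 * deriv b 0 + 2 * deriv a 0 * deriv (deriv b) 0 := by
    rw [show (fun z => 2 * deriv a z * deriv b z)
        = fun z => (2 * deriv a z) * deriv b z from rfl,
      mul_d1 (a := fun z => 2 * deriv a z) (analyticAt_const.mul (analyticAt_deriv2 ha))
        (analyticAt_deriv2 hb),
      deriv_const_mul _ (analyticAt_deriv2 ha).differentiableAt]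
    all_goals ring
  rw [this]
  all_goals ring

lemma comp_d1 {u v : ℂ → ℂ} (hu : AnalyticAt ℂ u (v 0)) (hv : AnalyticAt ℂ v 0) :
    deriv (fun z => u (v z)) 0 = deriv u (v 0) * deriv v 0 :=
  deriv_comp 0 hu.differentiableAt hv.differentiableAt

lemma comp_d2 {u v : ℂ → ℂ} (hu : AnalyticAt ℂ u (v 0)) (hv : AnalyticAt ℂ v 0) :
    deriv (deriv (fun z => u (v z))) 0 =
      deriv (deriv u) (v 0) * (deriv v 0)^2 + deriv u (v 0) * deriv (deriv v) 0 := by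
  have hu' : AnalyticAt ℂ (deriv u) (v 0) := analyticAt_deriv2 hu
  have A1 : AnalyticAt ℂ (fun z => deriv u (v z)) 0 := hu'.comp hv
  rw [(evDeriv_comp hu hv).deriv_eq, mul_d1 A1 (analyticAt_deriv2 hv),
    comp_d1 hu' hv]
  ring

lemma comp_d3 {u v : ℂ → ℂ} (hu : AnalyticAt ℂ u (v 0)) (hv : AnalyticAt ℂ v 0) :
    deriv (deriv (deriv (fun z => u (v z)))) 0 =
      deriv (deriv (deriv u)) (v 0) * (deriv v 0)^3
      + 3 * deriv (deriv u) (v 0) * deriv v 0 * deriv (deriv v) 0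
      + deriv u (v 0) * deriv (deriv (deriv v)) 0 := by
  have hu' : AnalyticAt ℂ (deriv u) (v 0) := analyticAt_deriv2 hu
  have hu'' : AnalyticAt ℂ (deriv (deriv u)) (v 0) := analyticAt_deriv2 hu'
  have hv' : AnalyticAt ℂ (deriv v) 0 := analyticAt_deriv2 hv
  have hv'' : AnalyticAt ℂ (deriv (deriv v)) 0 := analyticAt_deriv2 hv'
  have A1 : AnalyticAt ℂ (fun z => deriv u (v z)) 0 := hu'.comp hv
  have A2 : AnalyticAt ℂ (fun z => deriv (deriv u) (v z)) 0 := hu''.comp hv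
  have evc2 : deriv (deriv (fun z => u (v z))) =ᶠ[nhds 0]
      fun z => (deriv (deriv u) (v z) * deriv v z) * deriv v z
        + deriv u (v z) * deriv (deriv v) z := by
    refine ((evDeriv_comp hu hv).deriv).trans ?_
    refine (evDeriv_mul A1 hv').trans ?_
    filter_upwards [evDeriv_comp hu' hv] with z hz
    rw [hz]
  rw [evc2.deriv_eq]
  have h1 : AnalyticAt ℂ (fun z => deriv (deriv u) (v z) * deriv v z) 0 := A2.mul hv'
  rw [deriv_fun_add (f := fun z => deriv (deriv u) (v z) * deriv v z * deriv v z)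
      (g := fun z => deriv u (v z) * deriv (deriv v) z)
      ((h1.mul hv').differentiableAt) ((A1.mul hv'').differentiableAt),
    mul_d1 h1 hv', mul_d1 A1 hv'', mul_d1 A2 hv', comp_d1 hu'' hv, comp_d1 hu' hv]
  ring

lemma core {h : ℂ → ℂ} (hb : ∀ z ∈ ball (0:ℂ) 1, ‖h z‖ ≤ 1)
    (hha : AnalyticAt ℂ h 0) (hhd : DifferentiableOn ℂ h (ball 0 1)) :
    ‖deriv h 0‖ ≤ 1 - ‖h 0‖^2 := by
  set c := h 0 with hc
  by_cases hc1 : ‖c‖ = 1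
  · have hmax : IsLocalMax (norm ∘ h) 0 := by
      filter_upwards [ball_mem_nhds (0:ℂ) one_pos] with z hz
      simpa [← hc, hc1] using hb z hz
    have hev : ∀ᶠ y in nhds (0:ℂ), h y = h 0 :=
      Complex.eventually_eq_of_isLocalMax_norm
        (hha.eventually_analyticAt.mono fun z hz => hz.differentiableAt) hmax
    have : deriv h 0 = 0 := by
      rw [Filter.EventuallyEq.deriv_eq (hev : h =ᶠ[nhds 0] fun _ => h 0)]
      exact deriv_const 0 (h 0)
    simp [this, hc1]
  · have habs : ‖c‖ < 1 := lt_of_le_of_ne (hb 0 (mem_ball_self one_pos)) hc1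
    set q : ℂ → ℂ := fun z => (h z - c) / (1 - (starRingEnd ℂ) c * h z) with hq
    have hden : ∀ z ∈ ball (0:ℂ) 1, (1 - (starRingEnd ℂ) c * h z) ≠ 0 := by
      intro z hz hzero
      have h1 : (1 : ℂ) = (starRingEnd ℂ) c * h z := by linear_combination hzero
      have h2 : (1:ℝ) = ‖(starRingEnd ℂ) c * h z‖ := by rw [← h1]; simp
      rw [norm_mul, Complex.norm_conj] at h2
      nlinarith [hb z hz, norm_nonneg c, norm_nonneg (h z)]
    have hineq : ∀ w : ℂ, ‖w‖ ≤ 1 →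
        ‖w - c‖ ≤ ‖1 - (starRingEnd ℂ) c * w‖ := by
      intro w hw
      have idc : (normSq (1 - (starRingEnd ℂ) c * w) : ℂ) - (normSq (w - c) : ℂ) =
          ((1 : ℂ) - normSq c) * (1 - normSq w) := by
        rw [← Complex.mul_conj, ← Complex.mul_conj, ← Complex.mul_conj, ← Complex.mul_conj]
        simp only [map_sub, map_mul, map_one, Complex.conj_conj]
        ring
      have idr : normSq (1 - (starRingEnd ℂ) c * w) - normSq (w - c) =
          (1 - normSq c) * (1 - normSq w) := by exact_mod_cast idc
      have hnc : normSq c ≤ 1 := by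
        rw [← Complex.sq_norm]; nlinarith [norm_nonneg c]
      have hnw : normSq w ≤ 1 := by
        rw [← Complex.sq_norm]; nlinarith [norm_nonneg w]
      have h1 : normSq (w - c) ≤ normSq (1 - (starRingEnd ℂ) c * w) := by
        nlinarith [idr, hnc, hnw]
      rw [Complex.norm_def, Complex.norm_def]
      exact Real.sqrt_le_sqrt h1
    have hqb : ∀ z ∈ ball (0:ℂ) 1, ‖q z‖ ≤ 1 := by
      intro z hz
      rw [hq]
      simp only [norm_div]
      rw [div_le_one (norm_pos_iff.mpr (hden z hz))]
      exact hineq (h z) (hb z hz)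
    have hq0 : q 0 = 0 := by simp [hq, ← hc]
    have hqd : DifferentiableOn ℂ q (ball 0 1) := by
      apply DifferentiableOn.div
      · exact hhd.sub (differentiableOn_const c)
      · exact (differentiableOn_const 1).sub ((differentiableOn_const _).mul hhd)
      · exact hden
    -- Schwarz: |q'(0)| ≤ 1
    have hqs : ‖deriv q 0‖ ≤ 1 := by
      apply le_of_forall_pos_le_add
      intro ε hε
      have hmaps : MapsTo q (ball 0 1) (ball (q 0) (1 + ε)) := by
        intro z hz
        rw [hq0, mem_ball, dist_zero_right]
        calc ‖q z‖ ≤ 1 := hqb z hz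
        _ < 1 + ε := by linarith
      have := Complex.norm_deriv_le_div_of_mapsTo_ball hqd (hmaps.mono_right ball_subset_closedBall) one_pos
      simpa using this
    -- compute deriv q 0
    have hden0 : (1 : ℂ) - (starRingEnd ℂ) c * c = ((1 - ‖c‖ ^ 2 : ℝ) : ℂ) := by
      rw [mul_comm, Complex.mul_conj]
      push_cast [Complex.sq_norm]
      ring
    have hden0' : ((1 - ‖c‖ ^ 2 : ℝ) : ℂ) ≠ 0 := by
      rw [Ne, Complex.ofReal_eq_zero]
      nlinarith [norm_nonneg c]
    have hderivq : deriv q 0 = deriv h 0 / ((1 - ‖c‖ ^ 2 : ℝ) : ℂ) := by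
      rw [hq]
      rw [deriv_fun_div (c := fun z => h z - c) (d := fun z => 1 - (starRingEnd ℂ) c * h z)
        (hha.differentiableAt.sub_const c)
        ((differentiableAt_const (1:ℂ)).sub ((differentiableAt_const _).mul hha.differentiableAt))
        (by rw [← hc]; rw [hden0]; exact hden0')]
      rw [deriv_sub_const, deriv_const_sub, deriv_const_mul _ hha.differentiableAt]
      rw [← hc, hden0, sub_self, zero_mul]
      have hX : ((1:ℂ) - (‖c‖ : ℂ)^2) ≠ 0 := by
        push_cast at hden0'; exact hden0'
      push_cast
      field_simp
      ring
    have habsq : ‖deriv q 0‖ =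
        ‖deriv h 0‖ / (1 - ‖c‖ ^ 2) := by
      rw [hderivq, norm_div, Complex.norm_real, Real.norm_eq_abs, abs_of_pos (by nlinarith [norm_nonneg c])]
    rw [habsq, div_le_one (by nlinarith [norm_nonneg c])] at hqs
    exact hqs

lemma schwarz_pick2 {ψ : ℂ → ℂ} (hψ : DifferentiableOn ℂ ψ (ball 0 1)) (hψ0 : ψ 0 = 0)
    (hmap : ∀ z ∈ ball (0:ℂ) 1, ψ z ∈ ball (0:ℂ) 1) :
    ‖deriv ψ 0‖ ≤ 1 ∧
      ‖deriv (deriv ψ) 0‖ ≤ 2 * (1 - ‖deriv ψ 0‖^2) := by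
  have hball : (ball (0:ℂ) 1) ∈ nhds (0:ℂ) := ball_mem_nhds _ one_pos
  have hψa : AnalyticAt ℂ ψ 0 := hψ.analyticAt hball
  set h := dslope ψ 0 with hhdef
  have hmaps : MapsTo ψ (ball 0 1) (ball (ψ 0) 1) := by
    intro z hz; rw [hψ0]; exact hmap z hz
  have hb : ∀ z ∈ ball (0:ℂ) 1, ‖h z‖ ≤ 1 := by
    intro z hz
    have := Complex.norm_dslope_le_div_of_mapsTo_ball hψ (hmaps.mono_right ball_subset_closedBall) hz
    simpa using this
  have hd1 : h 0 = deriv ψ 0 := dslope_same ψ 0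
  have hb0 : ‖h 0‖ ≤ 1 := hb 0 (mem_ball_self one_pos)
  refine ⟨by rwa [hd1] at hb0, ?_⟩
  have hha : AnalyticAt ℂ h 0 := by
    obtain ⟨p, hp⟩ := hψa
    exact (hp.has_fpower_series_dslope_fslope).analyticAt
  have hhd : DifferentiableOn ℂ h (ball 0 1) :=
    (differentiableOn_dslope hball).mpr hψ
  have key2 : deriv (deriv ψ) 0 = 2 * deriv h 0 := by
    have hzh : ∀ z, ψ z = z * h z := by
      intro z
      have := sub_smul_dslope ψ 0 z
      simp only [sub_zero, hψ0, smul_eq_mul] at this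
      rw [← this]
    have e1 : deriv ψ =ᶠ[nhds 0] fun z => h z + z * deriv h z := by
      have : deriv ψ =ᶠ[nhds 0] deriv (fun z => z * h z) :=
        Filter.EventuallyEq.deriv (Filter.Eventually.of_forall hzh)
      refine this.trans ?_
      filter_upwards [hha.eventually_analyticAt] with z hz
      rw [deriv_fun_mul differentiableAt_fun_id hz.differentiableAt]
      simp [deriv_id'']
    rw [e1.deriv_eq, deriv_fun_add (f := h) (g := fun z => z * deriv h z) hha.differentiableAt
        (differentiableAt_fun_id.mul (analyticAt_deriv2 hha).differentiableAt),
      deriv_fun_mul differentiableAt_fun_id (analyticAt_deriv2 hha).differentiableAt]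
    simp [deriv_id'']; ring
  have hcore := core hb hha hhd
  rw [key2, ← hd1, norm_mul, Complex.norm_two]
  nlinarith [hcore, norm_nonneg (deriv h 0)]

/-- `g` is subordinate to `h` on the unit disk: there is an analytic `ω : 𝔻 → 𝔻`
with `ω 0 = 0` such that `g = h ∘ ω` on `𝔻`. -/
def Subordinate (g h : ℂ → ℂ) : Prop :=
  ∃ ω : ℂ → ℂ, DifferentiableOn ℂ ω (ball 0 1) ∧ ω 0 = 0 ∧
    (∀ z ∈ ball (0 : ℂ) 1, ω z ∈ ball (0 : ℂ) 1) ∧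
    ∀ z ∈ ball (0 : ℂ) 1, g z = h (ω z)

theorem stmt14
    (f F : ℂ → ℂ)
    (hf : DifferentiableOn ℂ f (ball 0 1)) (hf0 : f 0 = 0) (hf1 : deriv f 0 = 1)
    (hfi : InjOn f (ball 0 1))
    (hF : DifferentiableOn ℂ F (ball 0 1)) (hF0 : F 0 = 0) (hFi : InjOn F (ball 0 1))
    (hFf : ∀ᶠ z in nhds (0 : ℂ), F (f z) = z)
    (φ : ℂ → ℂ) (B₁ B₂ : ℝ)
    (hφ : DifferentiableOn ℂ φ (ball 0 1)) (hφ0 : φ 0 = 1)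
    (hB₁ : 0 < B₁) (hφ1 : deriv φ 0 = (B₁ : ℂ)) (hφ2 : iteratedDeriv 2 φ 0 = 2 * (B₂ : ℂ))
    (g : ℂ → ℂ) (hg0 : g 0 = 1)
    (hgf : ∀ z ∈ ball (0 : ℂ) 1, z ≠ 0 → g z = z * deriv f z / f z)
    (hgsub : Subordinate g φ)
    (hFsub : Subordinate (deriv F) φ) :
    ‖iteratedDeriv 2 f 0 / 2‖ ≤ Real.sqrt (5 * (B₁ + |B₂ - B₁|)) / 3 := by
  have hball : (ball (0:ℂ) 1) ∈ nhds (0:ℂ) := ball_mem_nhds _ one_pos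
  have it2 : ∀ u : ℂ → ℂ, iteratedDeriv 2 u 0 = deriv (deriv u) 0 := by
    intro u
    rw [show (2:ℕ) = 1 + 1 from rfl, iteratedDeriv_succ, iteratedDeriv_one]
  have hfa : AnalyticAt ℂ f 0 := hf.analyticAt hball
  have hFaz : AnalyticAt ℂ F 0 := hF.analyticAt hball
  have hFa0 : AnalyticAt ℂ F (f 0) := by rw [hf0]; exact hFaz
  have hφa : AnalyticAt ℂ φ 0 := hφ.analyticAt hball
  set A := deriv (deriv f) 0 with hA
  set T := deriv (deriv (deriv f)) 0 with hT
  set F2 := deriv (deriv F) 0 with hF2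
  set F3 := deriv (deriv (deriv F)) 0 with hF3
  have hφ2' : deriv (deriv φ) 0 = 2 * (B₂ : ℂ) := by rw [← it2 φ]; exact hφ2
  have hid1 : deriv (fun z : ℂ => z) 0 = 1 := by rw [deriv_id'']
  have hid2 : deriv (deriv (fun z : ℂ => z)) 0 = 0 := by
    rw [deriv_id'']; simp
  have hid3 : deriv (deriv (deriv (fun z : ℂ => z))) 0 = 0 := by
    rw [deriv_id'']; simp
  -- Step 1: inverse function coefficients
  have hE : (fun z => F (f z)) =ᶠ[nhds (0:ℂ)] (fun z => z) := hFf
  have e1 : deriv F 0 = 1 := by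
    have h := (comp_d1 hFa0 hfa).symm.trans hE.deriv_eq
    rw [hf0, hf1, hid1] at h
    simpa using h
  have e2 : F2 = -A := by
    have h := (comp_d2 hFa0 hfa).symm.trans (hE.deriv.deriv_eq)
    rw [hf0, hf1, e1, hid2] at h
    rw [hF2, hA]
    linear_combination h
  have e3 : F3 = 3 * A^2 - T := by
    have h := (comp_d3 hFa0 hfa).symm.trans ((hE.deriv.deriv).deriv_eq)
    rw [hf0, hf1, e1, hid3] at h
    rw [← hF2, e2] at h
    rw [hF3, hA, hT]
    linear_combination h
  -- Step 2: subordination data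
  obtain ⟨ω₁, hω₁d, hω₁0, hω₁m, hω₁e⟩ := hgsub
  obtain ⟨ω₂, hω₂d, hω₂0, hω₂m, hω₂e⟩ := hFsub
  have hω₁a : AnalyticAt ℂ ω₁ 0 := hω₁d.analyticAt hball
  have hω₂a : AnalyticAt ℂ ω₂ 0 := hω₂d.analyticAt hball
  have hφaω₁ : AnalyticAt ℂ φ (ω₁ 0) := by rw [hω₁0]; exact hφa
  have hφaω₂ : AnalyticAt ℂ φ (ω₂ 0) := by rw [hω₂0]; exact hφa
  have hge : g =ᶠ[nhds (0:ℂ)] fun z => φ (ω₁ z) := by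
    filter_upwards [hball] with z hz; exact hω₁e z hz
  have hFe : deriv F =ᶠ[nhds (0:ℂ)] fun z => φ (ω₂ z) := by
    filter_upwards [hball] with z hz; exact hω₂e z hz
  have hga : AnalyticAt ℂ g 0 := (hφaω₁.comp hω₁a).congr hge.symm
  set c₁ := deriv ω₁ 0 with hc₁
  set e₁ := deriv (deriv ω₁) 0 with he₁
  set d₁ := deriv ω₂ 0 with hd₁
  set e₂ := deriv (deriv ω₂) 0 with he₂
  have gs1 : deriv g 0 = B₁ * c₁ := by
    have h := hge.deriv_eq.trans (comp_d1 hφaω₁ hω₁a)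
    rw [hω₁0, hφ1] at h; exact h
  have gs2 : deriv (deriv g) 0 = 2 * B₂ * c₁^2 + B₁ * e₁ := by
    have h := (hge.deriv.deriv_eq).trans (comp_d2 hφaω₁ hω₁a)
    rw [hω₁0, hφ1, hφ2'] at h
    linear_combination h
  have fs1 : F2 = B₁ * d₁ := by
    have h := hFe.deriv_eq.trans (comp_d1 hφaω₂ hω₂a)
    rw [hω₂0, hφ1] at h; exact h
  have fs2 : F3 = 2 * B₂ * d₁^2 + B₁ * e₂ := by
    have h := (hFe.deriv.deriv_eq).trans (comp_d2 hφaω₂ hω₂a)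
    rw [hω₂0, hφ1, hφ2'] at h
    rw [hF3]; linear_combination h
  -- Step 3: g * f = z * f'
  have hid_a : AnalyticAt ℂ (fun z : ℂ => z) 0 := analyticAt_id
  have hprod : (fun z => g z * f z) =ᶠ[nhds (0:ℂ)] fun z => z * deriv f z := by
    filter_upwards [hball] with z hz
    by_cases hz0 : z = 0
    · subst hz0; rw [hg0, hf0]; ring
    · have hfz : f z ≠ 0 := by
        intro hcon
        exact hz0 (hfi hz (mem_ball_self one_pos) (by rw [hcon, hf0]))
      rw [hgf z hz hz0, div_mul_cancel₀ _ hfz]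
  have p2 : 2 * deriv g 0 + A = 2 * A := by
    have h := ((hprod.deriv).deriv_eq)
    rw [mul_d2 hga hfa, mul_d2 hid_a (analyticAt_deriv2 hfa)] at h
    rw [hf0, hf1, hg0, hid1, hid2] at h
    rw [hA]
    linear_combination h
  have p3 : 3 * deriv (deriv g) 0 + 3 * deriv g 0 * A + T = 3 * T := by
    have h := (((hprod.deriv).deriv).deriv_eq)
    rw [mul_d3 hga hfa, mul_d3 hid_a (analyticAt_deriv2 hfa)] at h
    rw [hf0, hf1, hg0, hid1, hid2, hid3] at h
    rw [hA, hT]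
    linear_combination h
  -- the key identity
  have hB₁C : (B₁ : ℂ) ≠ 0 := by exact_mod_cast hB₁.ne'
  have hd : d₁ = -2 * c₁ := by
    have h : (B₁:ℂ) * d₁ = (B₁:ℂ) * (-2 * c₁) := by
      linear_combination (-1:ℂ) * fs1 + e2 - 2*gs1 + p2
    exact mul_left_cancel₀ hB₁C h
  have KEY : (9:ℂ) * (A/2)^2 =
      ((B₂:ℂ) - B₁) * (3*c₁^2 + 2*d₁^2) + (B₁:ℂ) * (3*c₁^2 + 2*d₁^2)
        + (B₁:ℂ) * ((3/2)*e₁ + e₂) := by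
    linear_combination fs2 - e3 - (1/2:ℂ)*p3 + (3/2:ℂ)*gs2 + (3/4:ℂ)*A*p2
  -- real estimates
  have sp1 := schwarz_pick2 hω₁d hω₁0 hω₁m
  have sp2 := schwarz_pick2 hω₂d hω₂0 hω₂m
  set x := ‖c₁‖ with hx
  have hxd : ‖d₁‖ = 2 * x := by
    rw [hd]
    rw [show (-2 : ℂ) * c₁ = (-2) * c₁ from rfl, norm_mul]
    norm_num [hx]
  have hx1 : x ≤ 1 := sp1.1
  have hx12 : 2 * x ≤ 1 := by rw [← hxd]; exact sp2.1
  have hE1 : ‖e₁‖ ≤ 2 * (1 - x^2) := sp1.2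
  have hE2 : ‖e₂‖ ≤ 2 * (1 - (2*x)^2) := by
    have := sp2.2; rwa [hxd] at this
  have hx0 : 0 ≤ x := norm_nonneg _
  have hD0 : 0 ≤ |B₂ - B₁| := abs_nonneg _
  set X := ‖A/2‖ with hX
  have h9 : 9 * X^2 ≤ 5 * (B₁ + |B₂ - B₁|) := by
    have habs : 9 * X^2 = ‖(9:ℂ) * (A/2)^2‖ := by
      rw [norm_mul, norm_pow, hX, norm_div]
      norm_num
    have hsum : ‖(9:ℂ) * (A/2)^2‖ ≤
        |B₂ - B₁| * (11 * x^2) + B₁ * (11 * x^2)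
          + B₁ * ((3/2) * ‖e₁‖ + ‖e₂‖) := by
      rw [KEY]
      refine (norm_add_le _ _).trans ?_
      have t3 : ‖(B₁:ℂ) * ((3/2)*e₁ + e₂)‖ ≤
          B₁ * ((3/2) * ‖e₁‖ + ‖e₂‖) := by
        rw [norm_mul, Complex.norm_real, Real.norm_eq_abs, _root_.abs_of_pos hB₁]
        refine mul_le_mul_of_nonneg_left ?_ hB₁.le
        refine (norm_add_le _ _).trans ?_
        rw [norm_mul]
        gcongr
        norm_num
      refine add_le_add ?_ t3
      have hcc : (3*c₁^2 + 2*d₁^2) = 11 * c₁^2 := by rw [hd]; ring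
      have habs11 : ‖3*c₁^2 + 2*d₁^2‖ = 11 * x^2 := by
        rw [hcc, norm_mul, norm_pow]
        norm_num [hx]
      have t1 : ‖((B₂:ℂ) - B₁) * (3*c₁^2 + 2*d₁^2)‖ = |B₂ - B₁| * (11 * x^2) := by
        rw [norm_mul, habs11]
        congr 1
        rw [show ((B₂:ℂ) - B₁) = ((B₂ - B₁ : ℝ) : ℂ) by push_cast; ring, Complex.norm_real, Real.norm_eq_abs]
      have t2 : ‖(B₁:ℂ) * (3*c₁^2 + 2*d₁^2)‖ = B₁ * (11 * x^2) := by
        rw [norm_mul, habs11, Complex.norm_real, Real.norm_eq_abs, _root_.abs_of_pos hB₁]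
      refine (norm_add_le _ _).trans ?_
      rw [t1, t2]
    rw [habs]
    refine hsum.trans ?_
    nlinarith [mul_le_mul_of_nonneg_left hE1 hB₁.le, mul_le_mul_of_nonneg_left hE2 hB₁.le,
      mul_le_mul_of_nonneg_left (mul_le_mul hx12 hx12 (by linarith) (by norm_num : (0:ℝ) ≤ 1)) hD0,
      sq_nonneg x]
  -- conclude
  rw [it2 f, ← hA]
  rw [show ‖A/2‖ = X from rfl]
  rw [le_div_iff₀ (by norm_num : (0:ℝ) < 3)]
  have hX0 : 0 ≤ X := norm_nonneg _
  have : X * 3 = Real.sqrt ((X*3)^2) := (Real.sqrt_sq (by positivity)).symm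
  rw [this]
  apply Real.sqrt_le_sqrt
  nlinarith [h9]
end
end

section
/- Let f be bi-univalent with inverse extension F. If zf'(z)/f(z) ≺ φ(z) and F'(w) ≺ φ(w), then the third Taylor coefficient of f satisfies |a₃| ≤ 7(B₁ + |B₂ − B₁|)/9. -/
open Metric Set Complex

noncomputable section

open Filter Topology

lemma norm_sq_mobius (a w : ℂ) :
    normSq (1 - (starRingEnd ℂ) a * w) - normSq (w - a) = (1 - normSq a) * (1 - normSq w) := by
  simp only [normSq_apply, Complex.sub_re, Complex.sub_im, Complex.mul_re, Complex.mul_im,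
    Complex.conj_re, Complex.conj_im, Complex.one_re, Complex.one_im]
  ring

lemma schwarz_coeff (ω : ℂ → ℂ) (hω : DifferentiableOn ℂ ω (ball 0 1)) (hω0 : ω 0 = 0)
    (hmap : ∀ z ∈ ball (0:ℂ) 1, ω z ∈ ball (0:ℂ) 1) :
    ‖deriv ω 0‖ ≤ 1 ∧
      ‖deriv (deriv ω) 0‖ ≤ 2 * (1 - ‖deriv ω 0‖ ^ 2) := by
  have m0 : (0:ℂ) ∈ ball (0:ℂ) 1 := mem_ball_self one_pos
  have hb : ball (0:ℂ) 1 ∈ 𝓝 (0:ℂ) := isOpen_ball.mem_nhds m0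
  set q : ℂ → ℂ := dslope ω 0 with hqdef
  have hq : DifferentiableOn ℂ q (ball 0 1) := (differentiableOn_dslope hb).mpr hω
  have qa : AnalyticOnNhd ℂ q (ball 0 1) := hq.analyticOnNhd isOpen_ball
  have hq0 : q 0 = deriv ω 0 := dslope_same ω 0
  -- bound |q z| ≤ 1
  have hqb : ∀ z ∈ ball (0:ℂ) 1, ‖q z‖ ≤ 1 := by
    intro z hz
    have hmt : MapsTo ω (ball (0:ℂ) 1) (ball (ω 0) 1) := by
      rw [hω0]; exact fun x hx => hmap x hx
    have := Complex.norm_dslope_le_div_of_mapsTo_ball hω (hmt.mono_right ball_subset_closedBall) hz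
    simpa using this
  -- ω z = z * q z
  have hωq : ω = fun z => z * q z := by
    funext z
    rcases eq_or_ne z 0 with rfl | hz
    · simp [hω0]
    · rw [hqdef, dslope_of_ne ω hz, slope_def_field, hω0]
      field_simp
      ring
  -- deriv(deriv ω) 0 = 2 * deriv q 0
  have key2 : deriv (deriv ω) 0 = 2 * deriv q 0 := by
    have step : ∀ z ∈ ball (0:ℂ) 1, deriv ω z = q z + z * deriv q z := by
      intro z hz
      rw [hωq, deriv_fun_mul differentiableAt_fun_id ((qa z hz).differentiableAt)]
      simp
    have ev : deriv ω =ᶠ[𝓝 (0:ℂ)] fun z => q z + z * deriv q z :=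
      Filter.eventuallyEq_of_mem hb step
    rw [ev.deriv_eq, deriv_fun_add ((qa 0 m0).differentiableAt)
      (differentiableAt_fun_id.fun_mul ((qa.deriv 0 m0).differentiableAt)),
      deriv_fun_mul differentiableAt_fun_id ((qa.deriv 0 m0).differentiableAt)]
    simp; ring
  have habs1 : ‖deriv ω 0‖ ≤ 1 := by rw [← hq0]; exact hqb 0 m0
  refine ⟨habs1, ?_⟩
  by_cases hcase : ∀ z ∈ ball (0:ℂ) 1, ‖q z‖ < 1
  · -- strict case: Möbius transform + Schwarz
    set a : ℂ := q 0 with ha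
    have haa : ‖a‖ < 1 := hcase 0 m0
    have hsq : normSq a < 1 := by
      have := Complex.sq_norm a; nlinarith [norm_nonneg a]
    have hden : ∀ z ∈ ball (0:ℂ) 1, (1 - (starRingEnd ℂ) a * q z) ≠ 0 := by
      intro z hz h
      have h1 : (1:ℂ) = (starRingEnd ℂ) a * q z := by linear_combination h
      have := congrArg norm h1
      rw [norm_mul, norm_one, Complex.norm_conj] at this
      nlinarith [hcase z hz, norm_nonneg (q z), norm_nonneg a]
    set ψ : ℂ → ℂ := fun z => (q z - a) / (1 - (starRingEnd ℂ) a * q z) with hψdef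
    have hψd : DifferentiableOn ℂ ψ (ball 0 1) :=
      DifferentiableOn.div (hq.sub_const a)
        ((differentiableOn_const 1).sub (hq.const_smul ((starRingEnd ℂ) a))) hden
    have hψ0 : ψ 0 = 0 := by simp [hψdef, ← ha]
    have hψmap : MapsTo ψ (ball (0:ℂ) 1) (ball (0:ℂ) 1) := by
      intro z hz
      have hlt : ‖q z - a‖ < ‖1 - (starRingEnd ℂ) a * q z‖ := by
        have hid := norm_sq_mobius a (q z)
        have h1 : normSq (q z) < 1 := by
          have := Complex.sq_norm (q z); nlinarith [norm_nonneg (q z), hcase z hz]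
        have hpos : normSq (q z - a) < normSq (1 - (starRingEnd ℂ) a * q z) := by nlinarith
        have := Real.sqrt_lt_sqrt (normSq_nonneg _) hpos
        simpa [Complex.norm_def] using this
      rw [mem_ball_zero_iff]
      have hd0 : 0 < ‖1 - (starRingEnd ℂ) a * q z‖ :=
        lt_of_le_of_lt (norm_nonneg _) hlt
      rw [hψdef]
      simp only [norm_div]
      exact (div_lt_one hd0).mpr hlt
    have hschwarz : ‖deriv ψ 0‖ ≤ 1 :=
      Complex.norm_deriv_le_one_of_mapsTo_ball hψd (fun z hz => by rw [hψ0]; exact ball_subset_closedBall (hψmap hz)) one_pos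
    -- compute deriv ψ 0
    have hconj : (starRingEnd ℂ) a * a = (normSq a : ℂ) := by
      rw [mul_comm, Complex.mul_conj]
    have hdenne : ((1:ℂ) - (normSq a : ℂ)) ≠ 0 := by
      intro h
      have : ((1 - normSq a : ℝ) : ℂ) = 0 := by push_cast; linear_combination h
      have := Complex.ofReal_eq_zero.mp this
      linarith
    have hder : deriv ψ 0 = deriv q 0 / (1 - (normSq a : ℂ)) := by
      rw [hψdef]
      rw [deriv_fun_div ((qa 0 m0).differentiableAt.sub_const a)
        ((differentiableAt_const (1:ℂ)).fun_sub (((qa 0 m0).differentiableAt.const_mul _)))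
        (hden 0 m0)]
      rw [deriv_sub_const, deriv_const_sub, deriv_const_mul _ ((qa 0 m0).differentiableAt)]
      rw [← ha, hconj]
      have : q 0 - a = 0 := by rw [← ha]; ring
      rw [this]
      field_simp
      ring
    have habs : ‖deriv ψ 0‖ = ‖deriv q 0‖ / (1 - normSq a) := by
      rw [hder, norm_div]
      congr 1
      have : ((1:ℂ) - (normSq a : ℂ)) = ((1 - normSq a : ℝ) : ℂ) := by push_cast; ring
      rw [this, Complex.norm_real, Real.norm_eq_abs, abs_of_pos (by linarith)]
    have hq1 : ‖deriv q 0‖ ≤ 1 - normSq a := by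
      rw [habs] at hschwarz
      have hpos : (0:ℝ) < 1 - normSq a := by linarith
      calc ‖deriv q 0‖ = ‖deriv q 0‖ / (1 - normSq a) * (1 - normSq a) := by
            field_simp
        _ ≤ 1 * (1 - normSq a) := by
            apply mul_le_mul_of_nonneg_right hschwarz hpos.le
        _ = 1 - normSq a := one_mul _
    rw [key2, norm_mul]
    have habs2 : ‖deriv ω 0‖ ^ 2 = normSq a := by
      rw [← hq0]; exact Complex.sq_norm a
    rw [habs2]
    simp only [Complex.norm_two]
    linarith
  · -- constant case
    push_neg at hcase
    obtain ⟨z₀, hz₀, hge⟩ := hcase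
    have heq1 : ‖q z₀‖ = 1 := le_antisymm (hqb z₀ hz₀) hge
    have hmax : IsMaxOn (norm ∘ q) (ball (0:ℂ) 1) z₀ := by
      intro z hz
      simp only [Function.comp, mem_setOf_eq, heq1]
      exact hqb z hz
    have hconst : EqOn q (Function.const ℂ (q z₀)) (ball (0:ℂ) 1) :=
      Complex.eqOn_of_isPreconnected_of_isMaxOn_norm (convex_ball _ _).isPreconnected
        isOpen_ball hq hz₀ hmax
    have hd0 : deriv q 0 = 0 := by
      have ev : q =ᶠ[𝓝 (0:ℂ)] Function.const ℂ (q z₀) :=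
        Filter.eventuallyEq_of_mem hb hconst
      rw [ev.deriv_eq]
      exact deriv_const 0 (q z₀)
    have hq01 : ‖deriv ω 0‖ = 1 := by
      rw [← hq0]
      have := hconst m0
      rw [this]; exact heq1
    rw [key2, hd0, hq01]
    simp

lemma comp_coeff (φ ω : ℂ → ℂ) (hφ : DifferentiableOn ℂ φ (ball 0 1))
    (hω : DifferentiableOn ℂ ω (ball 0 1)) (hω0 : ω 0 = 0)
    (hmap : ∀ z ∈ ball (0:ℂ) 1, ω z ∈ ball (0:ℂ) 1) :
    deriv (fun z => φ (ω z)) 0 = deriv φ 0 * deriv ω 0 ∧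
      deriv (deriv (fun z => φ (ω z))) 0
        = deriv (deriv φ) 0 * (deriv ω 0)^2 + deriv φ 0 * deriv (deriv ω) 0 := by
  have m0 : (0:ℂ) ∈ ball (0:ℂ) 1 := mem_ball_self one_pos
  have hb : ball (0:ℂ) 1 ∈ 𝓝 (0:ℂ) := isOpen_ball.mem_nhds m0
  have φa : AnalyticOnNhd ℂ φ (ball 0 1) := hφ.analyticOnNhd isOpen_ball
  have ωa : AnalyticOnNhd ℂ ω (ball 0 1) := hω.analyticOnNhd isOpen_ball
  have step1 : ∀ z ∈ ball (0:ℂ) 1,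
      deriv (fun w => φ (ω w)) z = deriv φ (ω z) * deriv ω z := fun z hz =>
    deriv_comp z ((φa _ (hmap z hz)).differentiableAt) ((ωa z hz).differentiableAt)
  have first : deriv (fun z => φ (ω z)) 0 = deriv φ 0 * deriv ω 0 := by
    rw [step1 0 m0, hω0]
  refine ⟨first, ?_⟩
  have ev : deriv (fun z => φ (ω z)) =ᶠ[𝓝 (0:ℂ)] fun z => deriv φ (ω z) * deriv ω z :=
    Filter.eventuallyEq_of_mem hb step1
  rw [ev.deriv_eq]
  have hd1 : DifferentiableAt ℂ (fun z => deriv φ (ω z)) 0 := by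
    have h := (φa.deriv 0 m0).differentiableAt
    rw [← hω0] at h
    exact h.comp 0 ((ωa 0 m0).differentiableAt)
  rw [deriv_fun_mul hd1 ((ωa.deriv 0 m0).differentiableAt)]
  have hdφ : DifferentiableAt ℂ (deriv φ) (ω 0) := by
    rw [hω0]; exact (φa.deriv 0 m0).differentiableAt
  have h2 : deriv (fun z => deriv φ (ω z)) 0 = deriv (deriv φ) (ω 0) * deriv ω 0 :=
    deriv_comp 0 hdφ ((ωa 0 m0).differentiableAt)
  rw [h2, hω0]; ring


theorem stmt15
    (f F : ℂ → ℂ)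
    (hf : DifferentiableOn ℂ f (ball 0 1)) (hf0 : f 0 = 0) (hf1 : deriv f 0 = 1)
    (hfi : InjOn f (ball 0 1))
    (hF : DifferentiableOn ℂ F (ball 0 1)) (hF0 : F 0 = 0) (hFi : InjOn F (ball 0 1))
    (hFf : ∀ᶠ z in nhds (0 : ℂ), F (f z) = z)
    (φ : ℂ → ℂ) (B₁ B₂ : ℝ)
    (hφ : DifferentiableOn ℂ φ (ball 0 1)) (hφ0 : φ 0 = 1)
    (hB₁ : 0 < B₁) (hφ1 : deriv φ 0 = (B₁ : ℂ)) (hφ2 : iteratedDeriv 2 φ 0 = 2 * (B₂ : ℂ))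
    (g : ℂ → ℂ) (hg0 : g 0 = 1)
    (hgf : ∀ z ∈ ball (0 : ℂ) 1, z ≠ 0 → g z = z * deriv f z / f z)
    (hgsub : Subordinate g φ)
    (hFsub : Subordinate (deriv F) φ) :
    ‖iteratedDeriv 3 f 0 / 6‖ ≤ 7 * (B₁ + |B₂ - B₁|) / 9 := by
  have m0 : (0:ℂ) ∈ ball (0:ℂ) 1 := mem_ball_self one_pos
  have hb : ball (0:ℂ) 1 ∈ 𝓝 (0:ℂ) := isOpen_ball.mem_nhds m0
  have fa : AnalyticOnNhd ℂ f (ball 0 1) := hf.analyticOnNhd isOpen_ball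
  have Fa : AnalyticOnNhd ℂ F (ball 0 1) := hF.analyticOnNhd isOpen_ball
  have φa : AnalyticOnNhd ℂ φ (ball 0 1) := hφ.analyticOnNhd isOpen_ball
  obtain ⟨ω, hωd, hω0, hωmap, hgeq⟩ := hgsub
  obtain ⟨χ, hχd, hχ0, hχmap, hFeq⟩ := hFsub
  have ωa : AnalyticOnNhd ℂ ω (ball 0 1) := hωd.analyticOnNhd isOpen_ball
  have χa : AnalyticOnNhd ℂ χ (ball 0 1) := hχd.analyticOnNhd isOpen_ball
  have Ga : AnalyticOnNhd ℂ (fun z => φ (ω z)) (ball 0 1) := fun z hz =>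
    (φa _ (hωmap z hz)).comp (ωa z hz)
  have hG0 : φ (ω 0) = 1 := by rw [hω0, hφ0]
  -- the product relation  G f = z f'
  have hfz : ∀ z ∈ ball (0:ℂ) 1, z ≠ 0 → f z ≠ 0 := by
    intro z hz hz0 hfz
    exact hz0 (hfi hz m0 (by rw [hfz, hf0]))
  have hGf : EqOn (fun z => φ (ω z) * f z) (fun z => z * deriv f z) (ball (0:ℂ) 1) := by
    intro z hz
    rcases eq_or_ne z 0 with rfl | hz0
    · simp [hf0]
    · show φ (ω z) * f z = z * deriv f z
      rw [← hgeq z hz, hgf z hz hz0, div_mul_cancel₀ _ (hfz z hz hz0)]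
  have evGf : (fun z => φ (ω z) * f z) =ᶠ[𝓝 (0:ℂ)] (fun z => z * deriv f z) :=
    Filter.eventuallyEq_of_mem hb hGf
  -- derivatives of R := z f'
  have hR1 : ∀ z ∈ ball (0:ℂ) 1, deriv (fun w => w * deriv f w) z
      = deriv f z + z * deriv (deriv f) z := by
    intro z hz
    rw [deriv_fun_mul differentiableAt_fun_id ((fa.deriv z hz).differentiableAt)]
    simp
  have evR1 : deriv (fun w => w * deriv f w) =ᶠ[𝓝 (0:ℂ)]
      fun z => deriv f z + z * deriv (deriv f) z := Filter.eventuallyEq_of_mem hb hR1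
  have hR2 : ∀ z ∈ ball (0:ℂ) 1, deriv (fun w => deriv f w + w * deriv (deriv f) w) z
      = 2 * deriv (deriv f) z + z * deriv (deriv (deriv f)) z := by
    intro z hz
    rw [deriv_fun_add ((fa.deriv z hz).differentiableAt)
        (differentiableAt_fun_id.fun_mul ((fa.deriv.deriv z hz).differentiableAt)),
      deriv_fun_mul differentiableAt_fun_id ((fa.deriv.deriv z hz).differentiableAt)]
    simp; ring
  have evR2 : deriv (deriv (fun w => w * deriv f w)) =ᶠ[𝓝 (0:ℂ)]
      fun z => 2 * deriv (deriv f) z + z * deriv (deriv (deriv f)) z :=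
    evR1.deriv.trans (Filter.eventuallyEq_of_mem hb hR2)
  have d2R : deriv (deriv (fun w => w * deriv f w)) 0 = 2 * deriv (deriv f) 0 := by
    rw [evR2.eq_of_nhds]; simp
  have d3R : deriv (deriv (deriv (fun w => w * deriv f w))) 0
      = 3 * deriv (deriv (deriv f)) 0 := by
    rw [evR2.deriv_eq, deriv_fun_add (((fa.deriv.deriv 0 m0).differentiableAt).const_mul 2)
        (differentiableAt_fun_id.fun_mul ((fa.deriv.deriv.deriv 0 m0).differentiableAt)),
      deriv_const_mul 2 ((fa.deriv.deriv 0 m0).differentiableAt),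
      deriv_fun_mul differentiableAt_fun_id ((fa.deriv.deriv.deriv 0 m0).differentiableAt)]
    simp; ring
  -- derivatives of P := G f
  have hP1 : ∀ z ∈ ball (0:ℂ) 1, deriv (fun w => φ (ω w) * f w) z
      = deriv (fun w => φ (ω w)) z * f z + φ (ω z) * deriv f z := by
    intro z hz
    exact deriv_fun_mul ((Ga z hz).differentiableAt) ((fa z hz).differentiableAt)
  have evP1 : deriv (fun w => φ (ω w) * f w) =ᶠ[𝓝 (0:ℂ)]
      fun z => deriv (fun w => φ (ω w)) z * f z + φ (ω z) * deriv f z :=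
    Filter.eventuallyEq_of_mem hb hP1
  have hP2 : ∀ z ∈ ball (0:ℂ) 1,
      deriv (fun w => deriv (fun v => φ (ω v)) w * f w + φ (ω w) * deriv f w) z
      = deriv (deriv (fun v => φ (ω v))) z * f z
        + 2 * (deriv (fun v => φ (ω v)) z * deriv f z) + φ (ω z) * deriv (deriv f) z := by
    intro z hz
    rw [deriv_fun_add (((Ga.deriv z hz).differentiableAt).fun_mul ((fa z hz).differentiableAt))
        (((Ga z hz).differentiableAt).fun_mul ((fa.deriv z hz).differentiableAt)),
      deriv_fun_mul ((Ga.deriv z hz).differentiableAt) ((fa z hz).differentiableAt),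
      deriv_fun_mul ((Ga z hz).differentiableAt) ((fa.deriv z hz).differentiableAt)]
    ring
  have evP2 : deriv (deriv (fun w => φ (ω w) * f w)) =ᶠ[𝓝 (0:ℂ)]
      fun z => deriv (deriv (fun v => φ (ω v))) z * f z
        + 2 * (deriv (fun v => φ (ω v)) z * deriv f z) + φ (ω z) * deriv (deriv f) z :=
    evP1.deriv.trans (Filter.eventuallyEq_of_mem hb hP2)
  have d2P : deriv (deriv (fun w => φ (ω w) * f w)) 0
      = 2 * deriv (fun v => φ (ω v)) 0 + deriv (deriv f) 0 := by
    rw [evP2.eq_of_nhds, hf0, hf1, hG0]; ring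
  have d3P : deriv (deriv (deriv (fun w => φ (ω w) * f w))) 0
      = 3 * deriv (deriv (fun v => φ (ω v))) 0
        + 3 * (deriv (fun v => φ (ω v)) 0 * deriv (deriv f) 0)
        + deriv (deriv (deriv f)) 0 := by
    rw [evP2.deriv_eq]
    have D1 : DifferentiableAt ℂ (fun z => deriv (deriv fun v => φ (ω v)) z * f z) 0 :=
      (Ga.deriv.deriv 0 m0).differentiableAt.fun_mul ((fa 0 m0).differentiableAt)
    have D2 : DifferentiableAt ℂ (fun z => 2 * (deriv (fun v => φ (ω v)) z * deriv f z)) 0 :=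
      ((Ga.deriv 0 m0).differentiableAt.fun_mul ((fa.deriv 0 m0).differentiableAt)).const_mul 2
    have D3 : DifferentiableAt ℂ (fun z => φ (ω z) * deriv (deriv f) z) 0 :=
      ((Ga 0 m0).differentiableAt).fun_mul ((fa.deriv.deriv 0 m0).differentiableAt)
    rw [deriv_fun_add (D1.fun_add D2) D3, deriv_fun_add D1 D2,
      deriv_fun_mul ((Ga.deriv.deriv 0 m0).differentiableAt) ((fa 0 m0).differentiableAt),
      deriv_const_mul 2 (((Ga.deriv 0 m0).differentiableAt).fun_mul ((fa.deriv 0 m0).differentiableAt)),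
      deriv_fun_mul ((Ga.deriv 0 m0).differentiableAt) ((fa.deriv 0 m0).differentiableAt),
      deriv_fun_mul ((Ga 0 m0).differentiableAt) ((fa.deriv.deriv 0 m0).differentiableAt),
      hf0, hf1, hG0]
    ring
  -- the two product equations
  have eqn2 : 2 * deriv (fun v => φ (ω v)) 0 + deriv (deriv f) 0 = 2 * deriv (deriv f) 0 := by
    have h := (evGf.deriv.deriv).eq_of_nhds
    rw [d2P, d2R] at h
    exact h
  have eqn3 : 3 * deriv (deriv (fun v => φ (ω v))) 0
      + 3 * (deriv (fun v => φ (ω v)) 0 * deriv (deriv f) 0)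
      + deriv (deriv (deriv f)) 0 = 3 * deriv (deriv (deriv f)) 0 := by
    have h := (evGf.deriv.deriv).deriv_eq
    rw [d3P, d3R] at h
    exact h
  -- the F ∘ f = id relations
  have hev1 : ∀ᶠ z in 𝓝 (0:ℂ), f z ∈ ball (0:ℂ) 1 := by
    have hc : ContinuousAt f 0 := (fa 0 m0).differentiableAt.continuousAt
    apply hc.eventually_mem
    rw [hf0]; exact hb
  have hev2 : ∀ᶠ z in 𝓝 (0:ℂ), z ∈ ball (0:ℂ) 1 := hb
  have evK : (fun z => deriv F (f z) * deriv f z) =ᶠ[𝓝 (0:ℂ)] fun _ => (1:ℂ) := by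
    have e0 : (fun z => F (f z)) =ᶠ[𝓝 (0:ℂ)] fun z => z := hFf.mono fun z hz => hz
    have e1 := e0.deriv
    have e2 : deriv (fun w => F (f w)) =ᶠ[𝓝 (0:ℂ)]
        fun z => deriv F (f z) * deriv f z := by
      filter_upwards [hev1, hev2] with z h1 h2
      exact deriv_comp z ((Fa _ h1).differentiableAt) ((fa z h2).differentiableAt)
    have e3 : deriv (fun z : ℂ => z) = fun _ => (1:ℂ) := by
      funext z; exact deriv_id z
    exact e2.symm.trans (e1.trans (by rw [e3]))
  have hF1 : deriv F 0 = 1 := by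
    have h := evK.eq_of_nhds
    rw [hf0, hf1, mul_one] at h
    exact h
  have evL : (fun z => deriv (deriv F) (f z) * deriv f z * deriv f z
      + deriv F (f z) * deriv (deriv f) z) =ᶠ[𝓝 (0:ℂ)] fun _ => (0:ℂ) := by
    have evKd : deriv (fun w => deriv F (f w) * deriv f w) =ᶠ[𝓝 (0:ℂ)]
        fun z => deriv (deriv F) (f z) * deriv f z * deriv f z
          + deriv F (f z) * deriv (deriv f) z := by
      filter_upwards [hev1, hev2] with z h1 h2
      have hc1 : DifferentiableAt ℂ (fun w => deriv F (f w)) z :=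
        ((Fa.deriv _ h1).differentiableAt).comp z ((fa z h2).differentiableAt)
      have hcomp : deriv (fun w => deriv F (f w)) z = deriv (deriv F) (f z) * deriv f z :=
        deriv_comp z ((Fa.deriv _ h1).differentiableAt) ((fa z h2).differentiableAt)
      rw [deriv_fun_mul hc1 ((fa.deriv z h2).differentiableAt), hcomp]
    have hz : deriv (fun _ : ℂ => (1:ℂ)) = fun _ => (0:ℂ) := by
      funext z; exact deriv_const z 1
    exact evKd.symm.trans (evK.deriv.trans (by rw [hz]))
  have rel2 : deriv (deriv F) 0 + deriv (deriv f) 0 = 0 := by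
    have h := evL.eq_of_nhds
    rw [hf0, hf1, hF1] at h
    linear_combination h
  have rel3 : deriv (deriv (deriv F)) 0
      + 3 * (deriv (deriv F) 0 * deriv (deriv f) 0) + deriv (deriv (deriv f)) 0 = 0 := by
    have h := evL.deriv_eq
    rw [deriv_const] at h
    have hdd3 : DifferentiableAt ℂ (deriv (deriv F)) (f 0) := by
      rw [hf0]; exact (Fa.deriv.deriv 0 m0).differentiableAt
    have hdd1 : DifferentiableAt ℂ (deriv F) (f 0) := by
      rw [hf0]; exact (Fa.deriv 0 m0).differentiableAt
    have hdf : DifferentiableAt ℂ f 0 := (fa 0 m0).differentiableAt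
    have c1 : DifferentiableAt ℂ (fun z => deriv (deriv F) (f z)) 0 := hdd3.comp 0 hdf
    have c2 : DifferentiableAt ℂ (fun z => deriv F (f z)) 0 := hdd1.comp 0 hdf
    have c3 : DifferentiableAt ℂ (deriv f) 0 := (fa.deriv 0 m0).differentiableAt
    have c4 : DifferentiableAt ℂ (deriv (deriv f)) 0 := (fa.deriv.deriv 0 m0).differentiableAt
    have hcomp1 : deriv (fun z => deriv (deriv F) (f z)) 0
        = deriv (deriv (deriv F)) (f 0) * deriv f 0 := deriv_comp 0 hdd3 hdf
    have hcomp2 : deriv (fun z => deriv F (f z)) 0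
        = deriv (deriv F) (f 0) * deriv f 0 := deriv_comp 0 hdd1 hdf
    rw [deriv_fun_add ((c1.fun_mul c3).fun_mul c3) (c2.fun_mul c4), deriv_fun_mul (c1.fun_mul c3) c3,
      deriv_fun_mul c1 c3, deriv_fun_mul c2 c4, hcomp1, hcomp2, hf0, hf1, hF1] at h
    linear_combination h
  -- subordination coefficients
  have hdd2φ : deriv (deriv φ) 0 = 2 * (B₂:ℂ) := by
    have h2 : iteratedDeriv 2 φ = deriv (deriv φ) := by
      rw [show (2:ℕ) = 1+1 from rfl, iteratedDeriv_succ, iteratedDeriv_one]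
    rw [← h2, hφ2]
  obtain ⟨pG, qG⟩ := comp_coeff φ ω hφ hωd hω0 hωmap
  obtain ⟨pH, qH⟩ := comp_coeff φ χ hφ hχd hχ0 hχmap
  rw [hφ1] at pG pH
  rw [hφ1, hdd2φ] at qG qH
  have evF : deriv F =ᶠ[𝓝 (0:ℂ)] fun z => φ (χ z) := Filter.eventuallyEq_of_mem hb hFeq
  have hF3 : deriv (deriv (deriv F)) 0
      = 2*(B₂:ℂ) * (deriv χ 0)^2 + (B₁:ℂ) * deriv (deriv χ) 0 := by
    rw [evF.deriv.deriv_eq, qH]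
  obtain ⟨hx1, hx2⟩ := schwarz_coeff ω hωd hω0 hωmap
  obtain ⟨hy1, hy2⟩ := schwarz_coeff χ hχd hχ0 hχmap
  have hiter : iteratedDeriv 3 f 0 = deriv (deriv (deriv f)) 0 := by
    rw [show (3:ℕ) = 2+1 from rfl, iteratedDeriv_succ, show (2:ℕ) = 1+1 from rfl,
      iteratedDeriv_succ, iteratedDeriv_one]
  set x1 := deriv ω 0 with hx1def
  set x2 := deriv (deriv ω) 0 with hx2def
  set y1 := deriv χ 0 with hy1def
  set y2 := deriv (deriv χ) 0 with hy2def
  have hkey : deriv (deriv (deriv f)) 0 / 6 =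
      (6*((B₁:ℂ) * (x2/2 + x1^2) + ((B₂:ℂ) - (B₁:ℂ)) * x1^2)
        + ((B₁:ℂ) * (y2/2 + y1^2) + ((B₂:ℂ) - (B₁:ℂ)) * y1^2)) / 9 := by
    linear_combination (-(1:ℂ)/9) * eqn3 - (1/18) * rel3
      + (deriv (deriv f) 0 / 6) * rel2 + (deriv (deriv f) 0 / 6) * eqn2
      + (1/3) * qG + (1/18) * hF3
  rw [hiter, hkey]
  set U : ℂ := (B₁:ℂ) * (x2/2 + x1^2) + ((B₂:ℂ) - (B₁:ℂ)) * x1^2 with hUdef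
  set V : ℂ := (B₁:ℂ) * (y2/2 + y1^2) + ((B₂:ℂ) - (B₁:ℂ)) * y1^2 with hVdef
  have habs_coeff : ‖(B₂:ℂ) - (B₁:ℂ)‖ = |B₂ - B₁| := by
    rw [← Complex.ofReal_sub, Complex.norm_real, Real.norm_eq_abs]
  have key_bound : ∀ a b : ℂ, ‖a‖ ≤ 1 → ‖b‖ ≤ 2 * (1 - ‖a‖ ^ 2) →
      ‖(B₁:ℂ) * (b/2 + a^2) + ((B₂:ℂ) - (B₁:ℂ)) * a^2‖ ≤ B₁ + |B₂ - B₁| := by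
    intro a b ha hab
    have t1 : ‖b/2 + a^2‖ ≤ 1 := by
      have h := norm_add_le (b/2) (a^2)
      rw [norm_div, norm_pow, Complex.norm_two] at h
      nlinarith [norm_nonneg a, norm_nonneg b]
    have t2 : ‖a^2‖ ≤ 1 := by
      rw [norm_pow]
      nlinarith [norm_nonneg a]
    calc ‖(B₁:ℂ) * (b/2 + a^2) + ((B₂:ℂ) - (B₁:ℂ)) * a^2‖
        ≤ ‖(B₁:ℂ) * (b/2 + a^2)‖ + ‖((B₂:ℂ) - (B₁:ℂ)) * a^2‖ :=
          norm_add_le _ _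
      _ = B₁ * ‖b/2 + a^2‖ + |B₂ - B₁| * ‖a^2‖ := by
          rw [norm_mul, norm_mul, Complex.norm_real, Real.norm_eq_abs, abs_of_pos hB₁, habs_coeff]
      _ ≤ B₁ + |B₂ - B₁| := by
          nlinarith [abs_nonneg (B₂ - B₁), norm_nonneg (b/2 + a^2),
            norm_nonneg (a^2), hB₁]
  have hUb : ‖U‖ ≤ B₁ + |B₂ - B₁| := key_bound x1 x2 hx1 hx2
  have hVb : ‖V‖ ≤ B₁ + |B₂ - B₁| := key_bound y1 y2 hy1 hy2
  rw [norm_div]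
  have h9 : ‖(9:ℂ)‖ = 9 := by
    rw [show ((9:ℂ)) = ((9:ℝ):ℂ) by norm_num, Complex.norm_real]; norm_num
  rw [h9]
  have tri : ‖6*U + V‖ ≤ 6 * ‖U‖ + ‖V‖ := by
    have h := norm_add_le (6*U) V
    rw [norm_mul] at h
    have h6 : ‖(6:ℂ)‖ = 6 := by
      rw [show ((6:ℂ)) = ((6:ℝ):ℂ) by norm_num, Complex.norm_real]; norm_num
    rw [h6] at h
    exact h
  have : ‖6*U + V‖ ≤ 7 * (B₁ + |B₂ - B₁|) := by linarith
  linarith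
end
end
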